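/- For the Schlesinger system in dimension M with N poles, the Hamiltonians H_j := (1/2) Σ_{k≠j} tr(A_j A_k)/(λ_k - λ_j) satisfy Σ_j λ_j^{m+1} H_j = Ĥ_m + (1/4)(m+1) Σ_j λ_j^m C_j, where Ĥ_m := -(1/4) Σ_{k=0}^m tr(B_k B_{m-k}), B_k := Σ_j λ_j^k A_j, and C_j := tr(A_j^2), provided Σ_j A_j = 0. -/

import Mathlib

open Matrix

lemma swap_sum {ι α : Type*} [Fintype ι] [DecidableEq ι] [AddCommMonoid α] (g : ι → ι → α) :
    ∑ j, ∑ k ∈ Finset.univ.erase j, g j k = ∑ j, ∑ k ∈ Finset.univ.erase j, g k j := by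
  simp_rw [← Finset.filter_ne', Finset.sum_filter]
  rw [Finset.sum_comm]
  exact Finset.sum_congr rfl fun j _ => Finset.sum_congr rfl fun k _ => by
    simp [ne_comm]

lemma key_pair (a b : ℂ) (h : a ≠ b) (m : ℕ) :
    a^(m+1)/(b-a) + b^(m+1)/(a-b) = -∑ r ∈ Finset.range (m+1), a^r * b^(m-r) := by
  have hg : (∑ r ∈ Finset.range (m+1), a^r * b^(m-r)) * (a-b) = a^(m+1) - b^(m+1) := by
    simpa using geom_sum₂_mul a b (m+1)
  have hba : b - a ≠ 0 := sub_ne_zero.mpr (Ne.symm h)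
  have hab : a - b ≠ 0 := sub_ne_zero.mpr h
  field_simp
  linear_combination (b - a) * hg

lemma trace_lemma {N M : ℕ} (c d : Fin N → ℂ) (A : Fin N → Matrix (Fin M) (Fin M) ℂ) :
    ((∑ j, c j • A j) * (∑ k, d k • A k)).trace = ∑ j, ∑ k, c j * d k * (A j * A k).trace := by
  rw [Finset.sum_mul_sum]
  simp only [Matrix.trace_sum, Matrix.smul_mul, Matrix.mul_smul, smul_smul, Matrix.trace_smul,
    smul_eq_mul]
  exact Finset.sum_congr rfl fun j _ => Finset.sum_congr rfl fun k _ => by ring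

/-- For the Schlesinger system in dimension `M` with `N` poles, the Hamiltonians
`H_j := (1/2) ∑_{k≠j} tr(A_j A_k)/(λ_k - λ_j)` satisfy
`∑_j λ_j^{m+1} H_j = Ĥ_m + (1/4)(m+1) ∑_j λ_j^m C_j`, where
`Ĥ_m := -(1/4) ∑_{k=0}^m tr(B_k B_{m-k})`, `B_k := ∑_j λ_j^k A_j`, `C_j := tr(A_j²)`,
provided `∑_j A_j = 0`. -/
theorem symmetrized_hamiltonians (N M : ℕ) (lam : Fin N → ℂ)
    (hdist : ∀ i j : Fin N, i ≠ j → lam i ≠ lam j)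
    (A : Fin N → Matrix (Fin M) (Fin M) ℂ) (hsum : ∑ j, A j = 0) (m : ℕ) :
    ∑ j, lam j ^ (m + 1) *
        ((1/2 : ℂ) * ∑ k ∈ Finset.univ.erase j, (A j * A k).trace / (lam k - lam j)) =
      -(1/4 : ℂ) * (∑ k ∈ Finset.range (m + 1),
          ((∑ j, lam j ^ k • A j) * (∑ j, lam j ^ (m - k) • A j)).trace) +
        (1/4 : ℂ) * (m + 1 : ℂ) * ∑ j, lam j ^ m * (A j * A j).trace := by
  classical
  have h1 : ∀ r : ℕ, ((∑ j, lam j ^ r • A j) * (∑ j, lam j ^ (m - r) • A j)).trace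
      = ∑ j, ∑ k, lam j ^ r * lam k ^ (m - r) * (A j * A k).trace := fun r =>
    trace_lemma _ _ _
  have h2 : ∀ r ∈ Finset.range (m + 1),
      (∑ j, ∑ k, lam j ^ r * lam k ^ (m - r) * (A j * A k).trace)
      = (∑ j, lam j ^ m * (A j * A j).trace) +
        ∑ j, ∑ k ∈ Finset.univ.erase j, lam j ^ r * lam k ^ (m - r) * (A j * A k).trace := by
    intro r hr
    have hr' : r + (m - r) = m :=
      Nat.add_sub_cancel' (Nat.lt_succ_iff.mp (Finset.mem_range.mp hr))
    rw [← Finset.sum_add_distrib]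
    refine Finset.sum_congr rfl fun j _ => ?_
    rw [← Finset.add_sum_erase _ _ (Finset.mem_univ j), ← pow_add, hr']
  have h3 : ∑ r ∈ Finset.range (m + 1),
        (∑ j, ∑ k, lam j ^ r * lam k ^ (m - r) * (A j * A k).trace)
      = (m + 1 : ℂ) * (∑ j, lam j ^ m * (A j * A j).trace) +
        ∑ r ∈ Finset.range (m + 1), ∑ j, ∑ k ∈ Finset.univ.erase j,
          lam j ^ r * lam k ^ (m - r) * (A j * A k).trace := by
    rw [Finset.sum_congr rfl h2, Finset.sum_add_distrib, Finset.sum_const, Finset.card_range,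
      nsmul_eq_mul]
    push_cast
    ring
  have h4 : ∑ r ∈ Finset.range (m + 1), ∑ j, ∑ k ∈ Finset.univ.erase j,
        lam j ^ r * lam k ^ (m - r) * (A j * A k).trace
      = ∑ j, ∑ k ∈ Finset.univ.erase j,
          (∑ r ∈ Finset.range (m + 1), lam j ^ r * lam k ^ (m - r)) * (A j * A k).trace := by
    rw [Finset.sum_comm]
    refine Finset.sum_congr rfl fun j _ => ?_
    rw [Finset.sum_comm]
    exact Finset.sum_congr rfl fun k _ => (Finset.sum_mul _ _ _).symm
  set S : ℂ := ∑ j, ∑ k ∈ Finset.univ.erase j,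
      lam j ^ (m + 1) * ((A j * A k).trace / (lam k - lam j)) with hSdef
  have hswap : S = ∑ j, ∑ k ∈ Finset.univ.erase j,
      lam k ^ (m + 1) * ((A j * A k).trace / (lam j - lam k)) := by
    rw [hSdef, swap_sum (fun j k => lam j ^ (m + 1) * ((A j * A k).trace / (lam k - lam j)))]
    exact Finset.sum_congr rfl fun j _ => Finset.sum_congr rfl fun k _ => by
      rw [Matrix.trace_mul_comm]
  have h5 : 2 * S = -∑ j, ∑ k ∈ Finset.univ.erase j,
      (∑ r ∈ Finset.range (m + 1), lam j ^ r * lam k ^ (m - r)) * (A j * A k).trace := by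
    rw [two_mul]
    nth_rewrite 2 [hswap]
    rw [hSdef, ← Finset.sum_add_distrib, ← Finset.sum_neg_distrib]
    refine Finset.sum_congr rfl fun j _ => ?_
    rw [← Finset.sum_add_distrib, ← Finset.sum_neg_distrib]
    refine Finset.sum_congr rfl fun k hk => ?_
    have hjk : lam j ≠ lam k := hdist j k (Finset.ne_of_mem_erase hk).symm
    have := key_pair (lam j) (lam k) hjk m
    linear_combination (A j * A k).trace * this
  have hL : (∑ j, lam j ^ (m + 1) *
        ((1/2 : ℂ) * ∑ k ∈ Finset.univ.erase j, (A j * A k).trace / (lam k - lam j)))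
      = (1/2 : ℂ) * S := by
    rw [hSdef, Finset.mul_sum]
    refine Finset.sum_congr rfl fun j _ => ?_
    rw [Finset.mul_sum, Finset.mul_sum, Finset.mul_sum]
    exact Finset.sum_congr rfl fun k _ => by ring
  rw [hL, Finset.sum_congr rfl (fun r _ => h1 r), h3, h4]
  linear_combination (1/4 : ℂ) * h5
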